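/- The ring of Gevrey-type formal power series is a local ring: let O^z be the set of formal power series x = Σ_{d∈ℕ^s} Σ_{k≥0} a_{d,k} q^d z^k with complex coefficients such that there exist constants C₁, C₂ > 0 with |a_{d,k}| ≤ C₁ C₂^{|d|+k} |d|^k for all d, k (with the convention |d|^k = 1 when |d| = k = 0). Then any element x ∈ O^z with a_{0,0} ≠ 0 is invertible in O^z; in particular O^z is a local ring. -/

import Mathlib

open scoped BigOperators

noncomputable section

/-- The total degree `|d|` of a multi-index `d ∈ ℕ^s`. -/
def mdeg {s : ℕ} (d : Fin s →₀ ℕ) : ℕ := d.sum fun _ n => n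

/-- The Gevrey-type condition defining the ring `O^z`: a formal power series
`x = Σ_{d,k} a_{d,k} q^d z^k` (viewed as a power series in `z` with coefficients
formal power series in `q = (q₁,…,q_s)`) belongs to `O^z` iff there are constants
`C₁, C₂ > 0` with `|a_{d,k}| ≤ C₁ C₂^{|d|+k} |d|^k` for all `d, k`
(with the convention `|d|^k = 1` when `|d| = k = 0`, which is Lean's `0 ^ 0 = 1`). -/
def GevreyType (s : ℕ) (x : PowerSeries (MvPowerSeries (Fin s) ℂ)) : Prop :=
  ∃ C₁ C₂ : ℝ, 0 < C₁ ∧ 0 < C₂ ∧ ∀ (d : Fin s →₀ ℕ) (k : ℕ),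
    ‖MvPowerSeries.coeff d (PowerSeries.coeff k x)‖ ≤
      C₁ * C₂ ^ (mdeg d + k) * (mdeg d : ℝ) ^ k

lemma mdeg_zero {s : ℕ} : mdeg (0 : Fin s →₀ ℕ) = 0 := by
  simp [mdeg]

lemma mdeg_add {s : ℕ} (a b : Fin s →₀ ℕ) : mdeg (a + b) = mdeg a + mdeg b := by
  simp [mdeg, Finsupp.sum_add_index']

lemma le_mdeg {s : ℕ} (d : Fin s →₀ ℕ) (i : Fin s) : d i ≤ mdeg d := by
  by_cases hi : i ∈ d.support
  · exact Finset.single_le_sum (f := fun j => d j) (fun j _ => Nat.zero_le _) hi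
  · simp [Finsupp.notMem_support_iff.mp hi]

lemma mdeg_eq_zero {s : ℕ} {d : Fin s →₀ ℕ} (h : mdeg d = 0) : d = 0 := by
  ext i
  simpa using Nat.le_zero.mp (h ▸ le_mdeg d i)

lemma geom_range_le_two {r : ℝ} (h0 : 0 ≤ r) (h : r ≤ 1 / 2) (n : ℕ) :
    ∑ i ∈ Finset.range n, r ^ i ≤ 2 :=
  le_trans (Finset.sum_le_sum fun i _ => pow_le_pow_left₀ h0 h i) (sum_geometric_two_le n)

lemma geom_range_succ_le {r : ℝ} (h0 : 0 ≤ r) (h : r ≤ 1 / 2) (n : ℕ) :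
    ∑ i ∈ Finset.range (n + 1), r ^ i ≤ 1 + 2 * r := by
  rw [Finset.sum_range_succ']
  simp only [pow_succ, pow_zero]
  rw [← Finset.sum_mul]
  have h2 := geom_range_le_two h0 h n
  nlinarith [h2]

lemma sum_nat_antidiagonal_pow_le {r : ℝ} (h0 : 0 ≤ r) (h : r ≤ 1 / 2) (k : ℕ) :
    ∑ p ∈ Finset.HasAntidiagonal.antidiagonal k, r ^ p.1 ≤ 1 + 2 * r := by
  rw [Finset.Nat.sum_antidiagonal_eq_sum_range_succ_mk]
  exact geom_range_succ_le h0 h k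

lemma card_mdeg_filter_le {s : ℕ} (d : Fin s →₀ ℕ) (t : ℕ) :
    ((Finset.HasAntidiagonal.antidiagonal d).filter fun q => mdeg q.1 = t).card ≤ (t + 1) ^ s := by
  have hcard : ((Finset.univ : Finset (Fin s → Fin (t + 1)))).card = (t + 1) ^ s := by
    simp [Fintype.card_fun]
  refine le_trans (Finset.card_le_card_of_injOn
    (fun q i => (⟨min (q.1 i) t, lt_of_le_of_lt (min_le_right _ _) (Nat.lt_succ_self t)⟩ : Fin (t+1)))
    (fun a _ => Finset.mem_univ _) ?_) (le_of_eq hcard)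
  intro q hq q' hq' hfe
  simp only [Finset.coe_filter, Set.mem_setOf_eq, Finset.HasAntidiagonal.mem_antidiagonal] at hq hq'
  obtain ⟨hq1, hq2⟩ := hq
  obtain ⟨hq1', hq2'⟩ := hq'
  have hfirst : q.1 = q'.1 := by
    ext i
    have h1 : q.1 i ≤ t := hq2 ▸ le_mdeg q.1 i
    have h2 : q'.1 i ≤ t := hq2' ▸ le_mdeg q'.1 i
    have := congrFun hfe i
    simpa [Nat.min_eq_left h1, Nat.min_eq_left h2, Fin.mk.injEq] using this
  have hsecond : q.2 = q'.2 := by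
    have h : q.1 + q.2 = q.1 + q'.2 := by rw [hq1, hfirst, hq1']
    exact add_left_cancel h
  exact Prod.ext hfirst hsecond

lemma sum_finsupp_antidiagonal_pow_le {s : ℕ} (d : Fin s →₀ ℕ) {r : ℝ} (h0 : 0 ≤ r)
    (h : r ≤ 1 / 2 ^ (s + 1)) :
    ∑ q ∈ Finset.HasAntidiagonal.antidiagonal d, r ^ mdeg q.1 ≤ 1 + 2 ^ (s + 1) * r := by
  have hρ0 : (0:ℝ) ≤ 2 ^ s * r := by positivity
  have hρh : (2:ℝ) ^ s * r ≤ 1 / 2 := by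
    calc (2:ℝ) ^ s * r ≤ 2 ^ s * (1 / 2 ^ (s + 1)) :=
          mul_le_mul_of_nonneg_left h (by positivity)
      _ = 1 / 2 := by rw [pow_succ]; field_simp
  have hmaps : ∀ q ∈ Finset.HasAntidiagonal.antidiagonal d, mdeg q.1 ∈ Finset.range (mdeg d + 1) := by
    intro q hq
    rw [Finset.HasAntidiagonal.mem_antidiagonal] at hq
    have h1 : mdeg q.1 ≤ mdeg d := by
      have h2 := mdeg_add q.1 q.2
      rw [hq] at h2
      omega
    exact Finset.mem_range.mpr (Nat.lt_succ_of_le h1)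
  rw [← Finset.sum_fiberwise_of_maps_to hmaps (fun q => r ^ mdeg q.1)]
  calc ∑ t ∈ Finset.range (mdeg d + 1),
        ∑ q ∈ (Finset.HasAntidiagonal.antidiagonal d).filter fun q => mdeg q.1 = t, r ^ mdeg q.1
      ≤ ∑ t ∈ Finset.range (mdeg d + 1), (2 ^ s * r) ^ t := by
        refine Finset.sum_le_sum fun t _ => ?_
        have hconst : ∑ q ∈ (Finset.HasAntidiagonal.antidiagonal d).filter fun q => mdeg q.1 = t,
            r ^ mdeg q.1 = ((Finset.HasAntidiagonal.antidiagonal d).filter fun q => mdeg q.1 = t).card * r ^ t := by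
          rw [Finset.sum_congr rfl (fun q hq => by rw [(Finset.mem_filter.mp hq).2])]
          rw [Finset.sum_const, nsmul_eq_mul]
        rw [hconst]
        have hc1 : (((Finset.HasAntidiagonal.antidiagonal d).filter fun q => mdeg q.1 = t).card : ℝ)
            ≤ ((t + 1 : ℕ) : ℝ) ^ s := by
          have := card_mdeg_filter_le d t
          exact_mod_cast Nat.cast_le.mpr (le_trans this (le_of_eq rfl))
        have hc2 : ((t + 1 : ℕ) : ℝ) ≤ 2 ^ t := by
          have := Nat.lt_two_pow_self (n := t)
          exact_mod_cast Nat.succ_le_of_lt this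
        calc (((Finset.HasAntidiagonal.antidiagonal d).filter fun q => mdeg q.1 = t).card : ℝ) * r ^ t
            ≤ ((t + 1 : ℕ) : ℝ) ^ s * r ^ t :=
              mul_le_mul_of_nonneg_right hc1 (pow_nonneg h0 t)
          _ ≤ ((2:ℝ) ^ t) ^ s * r ^ t :=
              mul_le_mul_of_nonneg_right
                (pow_le_pow_left₀ (by positivity) hc2 s) (pow_nonneg h0 t)
          _ = (2 ^ s * r) ^ t := by
              rw [← pow_mul, Nat.mul_comm, pow_mul, ← mul_pow]
    _ ≤ 1 + 2 * (2 ^ s * r) := geom_range_succ_le hρ0 hρh _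
    _ = 1 + 2 ^ (s + 1) * r := by rw [pow_succ]; ring

/-- The key inductive estimate for the coefficients of the inverse. -/
lemma key_bound {s : ℕ} (A B : (Fin s →₀ ℕ) → ℕ → ℂ)
    (C₁ C₂ a r : ℝ) (hC₁ : 0 < C₁) (hC₂ : 0 < C₂) (ha : 0 < a)
    (hr0 : 0 < r) (hr1 : r ≤ 1 / 2 ^ (s + 1)) (hra : C₁ * 2 ^ (s + 3) * r ≤ a)
    (haA : ‖A 0 0‖ = a)
    (hbound : ∀ d k, ‖A d k‖ ≤ C₁ * C₂ ^ (mdeg d + k) * (mdeg d : ℝ) ^ k)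
    (hrec : ∀ (d : Fin s →₀ ℕ) (k : ℕ),
      ∑ p ∈ Finset.HasAntidiagonal.antidiagonal k, ∑ q ∈ Finset.HasAntidiagonal.antidiagonal d, A q.1 p.1 * B q.2 p.2
        = if k = 0 ∧ d = 0 then 1 else 0) :
    ∀ (d : Fin s →₀ ℕ) (k : ℕ),
      ‖B d k‖ ≤ a⁻¹ * (C₂ / r) ^ (mdeg d + k) * (mdeg d : ℝ) ^ k := by
  have hrhalf : r ≤ 1 / 2 := by
    have h2 : (2:ℝ) ≤ 2 ^ (s + 1) := by
      calc (2:ℝ) = 2 ^ 1 := (pow_one 2).symm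
        _ ≤ 2 ^ (s + 1) := pow_le_pow_right₀ one_le_two (by omega)
    calc r ≤ 1 / 2 ^ (s + 1) := hr1
      _ ≤ 1 / 2 := by
        apply div_le_div_of_nonneg_left one_pos.le two_pos h2
  set K : ℝ := C₂ / r with hKdef
  have hK : 0 < K := div_pos hC₂ hr0
  have hCK : C₂ = K * r := by rw [hKdef, div_mul_cancel₀ _ hr0.ne']
  suffices H : ∀ n (d : Fin s →₀ ℕ) (k : ℕ), mdeg d + k = n →
      ‖B d k‖ ≤ a⁻¹ * K ^ (mdeg d + k) * (mdeg d : ℝ) ^ k by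
    intro d k; exact H (mdeg d + k) d k rfl
  intro n
  induction n using Nat.strong_induction_on with
  | _ n IH =>
    intro d k hn
    by_cases hdk : k = 0 ∧ d = 0
    · -- base case
      obtain ⟨hk, hd⟩ := hdk
      subst hk hd
      have h := hrec 0 0
      simp only [Finset.Nat.antidiagonal_zero, Finsupp.antidiagonal_zero,
        Finset.sum_singleton] at h
      rw [if_pos ⟨by simp, by simp⟩] at h
      have habs : a * ‖B 0 0‖ = 1 := by
        rw [← haA, ← norm_mul, h, norm_one]
      have : ‖B 0 0‖ = a⁻¹ := by
        field_simp at habs ⊢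
        linarith [habs]
      rw [this, mdeg_zero]
      simp
    · -- inductive step
      have hd0 : ¬(mdeg d = 0 ∧ k = 0) := by
        rintro ⟨h1, h2⟩; exact hdk ⟨h2, mdeg_eq_zero h1⟩
      set D : ℝ := (mdeg d : ℝ) with hD
      have hD0 : 0 ≤ D := Nat.cast_nonneg _
      set X := (Finset.HasAntidiagonal.antidiagonal k) ×ˢ (Finset.HasAntidiagonal.antidiagonal d) with hX
      set f : (ℕ × ℕ) × ((Fin s →₀ ℕ) × (Fin s →₀ ℕ)) → ℂ :=
        fun z => A z.2.1 z.1.1 * B z.2.2 z.1.2 with hf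
      have hrd : ∑ z ∈ X, f z = 0 := by
        rw [hX, Finset.sum_product]
        have := hrec d k
        rw [if_neg hdk] at this
        exact this
      have hx0 : ((0, k), (0, d)) ∈ X := by
        simp [hX, Finset.mem_product]
      have hsplit := Finset.add_sum_erase X f hx0
      rw [hrd] at hsplit
      have hkey : A 0 0 * B d k = -∑ z ∈ X.erase ((0, k), (0, d)), f z := by
        have : f ((0, k), (0, d)) = A 0 0 * B d k := rfl
        rw [← this]
        linear_combination hsplit
      -- termwise bound
      have hterm : ∀ z ∈ X.erase ((0, k), (0, d)),
          ‖f z‖ ≤ (C₁ * a⁻¹ * K ^ n * D ^ k) * r ^ (mdeg z.2.1 + z.1.1) := by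
        rintro ⟨⟨p1, p2⟩, ⟨q1, q2⟩⟩ hz
        obtain ⟨hne, hzX⟩ := Finset.mem_erase.mp hz
        rw [hX, Finset.mem_product, Finset.HasAntidiagonal.mem_antidiagonal, Finset.HasAntidiagonal.mem_antidiagonal] at hzX
        obtain ⟨hp, hq⟩ := hzX
        dsimp only at hp hq hne ⊢
        have hq' : mdeg q1 + mdeg q2 = mdeg d := by
          rw [← mdeg_add, hq]
        have hm1pos : 0 < mdeg q1 + p1 := by
          rcases Nat.eq_zero_or_pos (mdeg q1 + p1) with h' | h'
          · exfalso
            have hp1 : p1 = 0 := by omega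
            have hq1 : q1 = 0 := mdeg_eq_zero (by omega)
            apply hne
            subst hp1 hq1
            simp only [zero_add] at hp hq
            rw [hp, hq]
          · exact h'
        have hlt : mdeg q2 + p2 < n := by omega
        have hB := IH _ hlt q2 p2 rfl
        have hA := hbound q1 p1
        have hmn : (mdeg q1 + p1) + (mdeg q2 + p2) = n := by omega
        have e1 : C₂ ^ (mdeg q1 + p1) * K ^ (mdeg q2 + p2) = K ^ n * r ^ (mdeg q1 + p1) := by
          calc C₂ ^ (mdeg q1 + p1) * K ^ (mdeg q2 + p2)
              = (K ^ (mdeg q1 + p1) * K ^ (mdeg q2 + p2)) * r ^ (mdeg q1 + p1) := by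
                rw [hCK, mul_pow]; ring
            _ = K ^ n * r ^ (mdeg q1 + p1) := by rw [← pow_add, hmn]
        have hmq1 : ((mdeg q1 : ℝ)) ≤ D := by
          rw [hD]; exact Nat.cast_le.mpr (by omega)
        have hmq2 : ((mdeg q2 : ℝ)) ≤ D := by
          rw [hD]; exact Nat.cast_le.mpr (by omega)
        calc ‖A q1 p1 * B q2 p2‖
            = ‖A q1 p1‖ * ‖B q2 p2‖ := norm_mul _ _
          _ ≤ (C₁ * C₂ ^ (mdeg q1 + p1) * (mdeg q1 : ℝ) ^ p1) *
              (a⁻¹ * K ^ (mdeg q2 + p2) * (mdeg q2 : ℝ) ^ p2) := by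
              apply mul_le_mul hA hB (norm_nonneg _) (by positivity)
          _ = (C₁ * a⁻¹) * (C₂ ^ (mdeg q1 + p1) * K ^ (mdeg q2 + p2)) *
              ((mdeg q1 : ℝ) ^ p1 * (mdeg q2 : ℝ) ^ p2) := by ring
          _ ≤ (C₁ * a⁻¹) * (K ^ n * r ^ (mdeg q1 + p1)) * (D ^ p1 * D ^ p2) := by
              rw [e1]
              have hfac : (mdeg q1 : ℝ) ^ p1 * (mdeg q2 : ℝ) ^ p2 ≤ D ^ p1 * D ^ p2 :=
                mul_le_mul (pow_le_pow_left₀ (Nat.cast_nonneg _) hmq1 p1)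
                  (pow_le_pow_left₀ (Nat.cast_nonneg _) hmq2 p2)
                  (by positivity) (by positivity)
              exact mul_le_mul_of_nonneg_left hfac (by positivity)
          _ = (C₁ * a⁻¹ * K ^ n * D ^ k) * r ^ (mdeg q1 + p1) := by
              rw [← pow_add, hp]; ring
      -- sum of weights bound
      have hW : ∑ z ∈ X.erase ((0, k), (0, d)), r ^ (mdeg z.2.1 + z.1.1) ≤ 2 ^ (s + 3) * r := by
        have h1 := Finset.add_sum_erase X
          (fun z => r ^ (mdeg z.2.1 + z.1.1)) hx0
        have hXsum : ∑ z ∈ X, r ^ (mdeg z.2.1 + z.1.1)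
            ≤ (1 + 2 * r) * (1 + 2 ^ (s + 1) * r) := by
          rw [hX, Finset.sum_product]
          have hinner : ∀ p ∈ Finset.HasAntidiagonal.antidiagonal k,
              ∑ q ∈ Finset.HasAntidiagonal.antidiagonal d, r ^ (mdeg q.1 + p.1)
                = (∑ q ∈ Finset.HasAntidiagonal.antidiagonal d, r ^ mdeg q.1) * r ^ p.1 := by
            intro p _
            rw [Finset.sum_mul]
            exact Finset.sum_congr rfl fun q _ => (pow_add r _ _)
          rw [Finset.sum_congr rfl hinner, ← Finset.mul_sum]
          have hSd := sum_finsupp_antidiagonal_pow_le d hr0.le hr1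
          have hSk := sum_nat_antidiagonal_pow_le hr0.le hrhalf k
          have hSd0 : (0:ℝ) ≤ ∑ q ∈ Finset.HasAntidiagonal.antidiagonal d, r ^ mdeg q.1 :=
            Finset.sum_nonneg fun q _ => pow_nonneg hr0.le _
          have hSk0 : (0:ℝ) ≤ ∑ p ∈ Finset.HasAntidiagonal.antidiagonal k, r ^ p.1 :=
            Finset.sum_nonneg fun p _ => pow_nonneg hr0.le _
          calc (∑ q ∈ Finset.HasAntidiagonal.antidiagonal d, r ^ mdeg q.1) *
                (∑ p ∈ Finset.HasAntidiagonal.antidiagonal k, r ^ p.1)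
              ≤ (1 + 2 ^ (s + 1) * r) * (1 + 2 * r) :=
                mul_le_mul hSd hSk hSk0 (by positivity)
            _ = (1 + 2 * r) * (1 + 2 ^ (s + 1) * r) := by ring
        have h1' : (1:ℝ) + ∑ z ∈ X.erase ((0, k), (0, d)), r ^ (mdeg z.2.1 + z.1.1)
            = ∑ z ∈ X, r ^ (mdeg z.2.1 + z.1.1) := by
          simpa [mdeg_zero] using h1
        have hc2 : (2:ℝ) ≤ 2 ^ (s + 1) := by
          calc (2:ℝ) = 2 ^ 1 := (pow_one 2).symm
            _ ≤ 2 ^ (s + 1) := pow_le_pow_right₀ one_le_two (by omega)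
        have hc4 : (2:ℝ) ^ (s + 3) = 4 * 2 ^ (s + 1) := by
          rw [show s + 3 = (s + 1) + 2 by omega, pow_add]
          ring
        have hsq : 2 ^ (s + 1) * (2 * r * r) ≤ 2 ^ (s + 1) * r := by
          have : 2 * r * r ≤ r := by nlinarith
          exact mul_le_mul_of_nonneg_left this (by positivity)
        nlinarith [hXsum, h1', hc2, hc4, hsq, hr0.le,
          mul_le_mul_of_nonneg_right hc2 hr0.le]
      -- final assembly
      have hE0 : (0:ℝ) ≤ C₁ * a⁻¹ * K ^ n * D ^ k := by positivity
      have habs2 : a * ‖B d k‖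
          ≤ (C₁ * a⁻¹ * K ^ n * D ^ k) * (2 ^ (s + 3) * r) := by
        calc a * ‖B d k‖ = ‖A 0 0 * B d k‖ := by
              rw [norm_mul, haA]
          _ = ‖∑ z ∈ X.erase ((0, k), (0, d)), f z‖ := by
              rw [hkey, norm_neg]
          _ ≤ ∑ z ∈ X.erase ((0, k), (0, d)), ‖f z‖ :=
              norm_sum_le _ _
          _ ≤ ∑ z ∈ X.erase ((0, k), (0, d)),
                (C₁ * a⁻¹ * K ^ n * D ^ k) * r ^ (mdeg z.2.1 + z.1.1) :=
              Finset.sum_le_sum hterm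
          _ = (C₁ * a⁻¹ * K ^ n * D ^ k) *
                ∑ z ∈ X.erase ((0, k), (0, d)), r ^ (mdeg z.2.1 + z.1.1) :=
              (Finset.mul_sum _ _ _).symm
          _ ≤ (C₁ * a⁻¹ * K ^ n * D ^ k) * (2 ^ (s + 3) * r) :=
              mul_le_mul_of_nonneg_left hW hE0
      have habs3 : a * ‖B d k‖ ≤ a * (a⁻¹ * K ^ n * D ^ k) := by
        calc a * ‖B d k‖
            ≤ (C₁ * a⁻¹ * K ^ n * D ^ k) * (2 ^ (s + 3) * r) := habs2
          _ = (C₁ * 2 ^ (s + 3) * r) * (a⁻¹ * K ^ n * D ^ k) := by ring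
          _ ≤ a * (a⁻¹ * K ^ n * D ^ k) :=
              mul_le_mul_of_nonneg_right hra (by positivity)
      have := le_of_mul_le_mul_left habs3 ha
      rw [hn]
      calc ‖B d k‖ ≤ a⁻¹ * K ^ n * D ^ k := by linarith [this]
        _ = a⁻¹ * K ^ n * D ^ k := rfl


/-- Any element of `O^z` whose leading coefficient `a_{0,0}` is nonzero is invertible
in `O^z`; in particular `O^z` is a local ring. -/
theorem Oz_unit_of_leading_ne_zero (s : ℕ) (x : PowerSeries (MvPowerSeries (Fin s) ℂ))
    (hx : GevreyType s x)
    (h0 : MvPowerSeries.coeff 0 (PowerSeries.coeff 0 x) ≠ 0) :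
    ∃ y : PowerSeries (MvPowerSeries (Fin s) ℂ), GevreyType s y ∧ x * y = 1 := by
  obtain ⟨C₁, C₂, hC₁, hC₂, hbound⟩ := hx
  -- construct the inverse
  have hc : MvPowerSeries.constantCoeff
      (PowerSeries.constantCoeff x) ≠ 0 := by
    simpa [PowerSeries.coeff_zero_eq_constantCoeff,
      MvPowerSeries.coeff_zero_eq_constantCoeff] using h0
  set c : MvPowerSeries (Fin s) ℂ := PowerSeries.constantCoeff x
    with hcdef
  let u₀ : ℂˣ := Units.mk0 _ hc
  have hcu : MvPowerSeries.constantCoeff c = ↑u₀ := rfl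
  let U : (MvPowerSeries (Fin s) ℂ)ˣ :=
    Units.mkOfMulEqOne c (MvPowerSeries.invOfUnit c u₀) (MvPowerSeries.mul_invOfUnit c u₀ hcu)
  have hU : PowerSeries.constantCoeff x = ↑U := rfl
  set y : PowerSeries (MvPowerSeries (Fin s) ℂ) := PowerSeries.invOfUnit x U with hydef
  have hxy : x * y = 1 := PowerSeries.mul_invOfUnit x U hU
  refine ⟨y, ?_, hxy⟩
  -- the coefficient functions
  set A : (Fin s →₀ ℕ) → ℕ → ℂ :=
    fun d k => MvPowerSeries.coeff d (PowerSeries.coeff k x)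
    with hA
  set B : (Fin s →₀ ℕ) → ℕ → ℂ :=
    fun d k => MvPowerSeries.coeff d (PowerSeries.coeff k y)
    with hB
  have hrec : ∀ (d : Fin s →₀ ℕ) (k : ℕ),
      ∑ p ∈ Finset.HasAntidiagonal.antidiagonal k, ∑ q ∈ Finset.HasAntidiagonal.antidiagonal d, A q.1 p.1 * B q.2 p.2
        = if k = 0 ∧ d = 0 then 1 else 0 := by
    intro d k
    have h1 : (MvPowerSeries.coeff d) ((PowerSeries.coeff k) (x * y))
        = (MvPowerSeries.coeff d) ((PowerSeries.coeff k)
            (1 : PowerSeries (MvPowerSeries (Fin s) ℂ))) := by rw [hxy]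
    rw [PowerSeries.coeff_mul, map_sum] at h1
    simp only [MvPowerSeries.coeff_mul] at h1
    have h2 : (MvPowerSeries.coeff d) ((PowerSeries.coeff k)
        (1 : PowerSeries (MvPowerSeries (Fin s) ℂ))) = if k = 0 ∧ d = 0 then 1 else 0 := by
      by_cases hk : k = 0
      · by_cases hd : d = 0 <;>
          simp [hk, hd, PowerSeries.coeff_one, MvPowerSeries.coeff_one]
      · simp [hk, PowerSeries.coeff_one]
    exact h1.trans h2
  -- constants
  set a : ℝ := ‖A 0 0‖ with ha'
  have ha : 0 < a := by
    rw [ha']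
    exact norm_pos_iff.mpr h0
  set r : ℝ := min (a / (C₁ * 2 ^ (s + 3))) (1 / 2 ^ (s + 1)) with hrdef
  have hr0 : 0 < r := lt_min (by positivity) (by positivity)
  have hr1 : r ≤ 1 / 2 ^ (s + 1) := min_le_right _ _
  have hra : C₁ * 2 ^ (s + 3) * r ≤ a := by
    have hle : r ≤ a / (C₁ * 2 ^ (s + 3)) := min_le_left _ _
    calc C₁ * 2 ^ (s + 3) * r ≤ C₁ * 2 ^ (s + 3) * (a / (C₁ * 2 ^ (s + 3))) :=
          mul_le_mul_of_nonneg_left hle (by positivity)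
      _ = a := by field_simp
  have hkey := key_bound A B C₁ C₂ a r hC₁ hC₂ ha hr0 hr1 hra rfl hbound hrec
  exact ⟨a⁻¹, C₂ / r, by positivity, by positivity, hkey⟩

end
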